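/- Let α ≥ 0 and x ≥ δ ≥ 1 be real numbers. Then (4 - 8/(√x + 1))·x^α ≤ (ln δ + 4 - 8√δ/(√x + √δ))·x^α, and (x^(α+1/2)/√δ - x^(α-1/2)·√δ + x^α·ln δ) ≤ x^(α+1/2) - x^(α-1/2). -/

import Mathlib

open Real Set

private lemma log_ge_one_sub_inv {t : ℝ} (ht : 0 < t) : 1 - 1/t ≤ Real.log t := by
  have h := Real.log_le_sub_one_of_pos (show (0:ℝ) < 1/t by positivity)
  rw [Real.log_div one_ne_zero ht.ne', Real.log_one] at h
  have : 0 - Real.log t ≤ 1/t - 1 := by simpa using h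
  linarith

private lemma logLB {t : ℝ} (ht : 1 ≤ t) : 2*(t-1) ≤ (t+1) * Real.log t := by
  set f : ℝ → ℝ := fun u => (u+1) * Real.log u - 2*(u-1) with hf
  have hmono : MonotoneOn f (Set.Ici 1) := by
    apply monotoneOn_of_hasDerivWithinAt_nonneg (convex_Ici 1)
      (f' := fun u => 1 * Real.log u + (u+1) * u⁻¹ - 2)
    · apply ContinuousOn.sub
      · apply ContinuousOn.mul
        · fun_prop
        · exact Real.continuousOn_log.mono (by
            intro u hu; simp only [Set.mem_Ici] at hu
            simp only [Set.mem_compl_iff, Set.mem_singleton_iff]; intro h; simp [h] at hu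
            linarith)
      · fun_prop
    · intro u hu
      rw [interior_Ici] at hu
      have hu0 : (0:ℝ) < u := lt_trans one_pos hu
      have h1 : HasDerivAt (fun u : ℝ => (u+1) * Real.log u)
          (1 * Real.log u + (u+1) * u⁻¹) u :=
        ((hasDerivAt_id u).add_const 1).mul (Real.hasDerivAt_log hu0.ne')
      have h2 : HasDerivAt f (1 * Real.log u + (u+1) * u⁻¹ - 2) u := by
        simpa [hf, Pi.sub_def] using h1.sub (((hasDerivAt_id u).sub_const 1).const_mul 2)
      exact h2.hasDerivWithinAt
    · intro u hu
      rw [interior_Ici] at hu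
      have hu0 : (0:ℝ) < u := lt_trans one_pos hu
      have hl := log_ge_one_sub_inv hu0
      have e : (u+1) * u⁻¹ = 1 + 1/u := by field_simp
      simp only [ge_iff_le, one_mul]
      rw [e]
      linarith [hl]
  have h01 : (1:ℝ) ∈ Set.Ici (1:ℝ) := by simp
  have := hmono h01 (show t ∈ Set.Ici (1:ℝ) from ht) ht
  simp only [hf, Real.log_one] at this
  nlinarith [this]

private lemma logUB {t : ℝ} (ht : 1 ≤ t) : 2 * t * Real.log t ≤ t^2 - 1 := by
  set g : ℝ → ℝ := fun u => u - u⁻¹ - 2 * Real.log u with hg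
  have hmono : MonotoneOn g (Set.Ici 1) := by
    apply monotoneOn_of_hasDerivWithinAt_nonneg (convex_Ici 1)
      (f' := fun u => 1 - (-(u^2)⁻¹) - 2 * u⁻¹)
    · apply ContinuousOn.sub
      · apply ContinuousOn.sub continuousOn_id
        apply ContinuousOn.inv₀ continuousOn_id
        intro u hu; simp only [Set.mem_Ici] at hu; intro h; simp [id] at h; simp [h] at hu
        linarith
      · apply ContinuousOn.mul continuousOn_const
        exact Real.continuousOn_log.mono (by
          intro u hu; simp only [Set.mem_Ici] at hu
          simp only [Set.mem_compl_iff, Set.mem_singleton_iff]; intro h; simp [h] at hu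
          linarith)
    · intro u hu
      rw [interior_Ici] at hu
      have hu0 : (0:ℝ) < u := lt_trans one_pos hu
      have h2 : HasDerivAt g (1 - (-(u^2)⁻¹) - 2 * u⁻¹) u := by
        simpa [hg, Pi.sub_def] using
          ((hasDerivAt_id u).sub (hasDerivAt_inv hu0.ne')).sub
            ((Real.hasDerivAt_log hu0.ne').const_mul 2)
      exact h2.hasDerivWithinAt
    · intro u hu
      rw [interior_Ici] at hu
      have hu0 : (0:ℝ) < u := lt_trans one_pos hu
      have h : 1 - (-(u^2)⁻¹) - 2 * u⁻¹ = (1 - u⁻¹)^2 := by field_simp; ring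
      rw [h]; positivity
  have h01 : (1:ℝ) ∈ Set.Ici (1:ℝ) := by simp
  have key := hmono h01 (show t ∈ Set.Ici (1:ℝ) from ht) ht
  simp only [hg, Real.log_one] at key
  have ht0 : (0:ℝ) < t := lt_of_lt_of_le one_pos ht
  have h2 : 0 ≤ t - t⁻¹ - 2 * Real.log t := by simpa using key
  have hinv : t * t⁻¹ = 1 := mul_inv_cancel₀ ht0.ne'
  nlinarith [mul_le_mul_of_nonneg_left h2 ht0.le]

theorem stmt_8 (x δ α : ℝ) (hα : 0 ≤ α) (hδ : 1 ≤ δ) (hx : δ ≤ x) :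
    (4 - 8 / (Real.sqrt x + 1)) * x ^ α
        ≤ (Real.log δ + 4 - 8 * Real.sqrt δ / (Real.sqrt x + Real.sqrt δ)) * x ^ α ∧
      x ^ (α + 1 / 2) / Real.sqrt δ - x ^ (α - 1 / 2) * Real.sqrt δ + x ^ α * Real.log δ
        ≤ x ^ (α + 1 / 2) - x ^ (α - 1 / 2) := by
  have hδ0 : (0:ℝ) < δ := lt_of_lt_of_le one_pos hδ
  have hx1 : (1:ℝ) ≤ x := le_trans hδ hx
  have hx0 : (0:ℝ) < x := lt_of_lt_of_le one_pos hx1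
  set s := Real.sqrt x with hs
  set t := Real.sqrt δ with ht
  have ht1 : 1 ≤ t := by rw [ht, show (1:ℝ) = Real.sqrt 1 by simp]; exact Real.sqrt_le_sqrt hδ
  have hts : t ≤ s := Real.sqrt_le_sqrt hx
  have hs1 : 1 ≤ s := le_trans ht1 hts
  have ht0 : (0:ℝ) < t := lt_of_lt_of_le one_pos ht1
  have hs0 : (0:ℝ) < s := lt_of_lt_of_le one_pos hs1
  have hs2 : s^2 = x := Real.sq_sqrt hx0.le
  have ht2 : t^2 = δ := Real.sq_sqrt hδ0.le
  have hlogδ : Real.log δ = 2 * Real.log t := by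
    rw [← ht2, Real.log_pow]; push_cast; ring
  have hL0 : 0 ≤ Real.log t := Real.log_nonneg ht1
  have hLB := logLB ht1
  have hUB := logUB ht1
  have hP : (0:ℝ) < x ^ α := Real.rpow_pos_of_pos hx0 α
  constructor
  · have key : 8 * t / (s + t) - 8 / (s + 1) ≤ 2 * Real.log t := by
      have hst : (0:ℝ) < s + t := by linarith
      have hs1' : (0:ℝ) < s + 1 := by linarith
      have e1 : 8 * t / (s + t) - 8 / (s + 1) = (8 * s * (t - 1)) / ((s + t) * (s + 1)) := by
        field_simp; ring
      rw [e1, div_le_iff₀ (by positivity)]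
      nlinarith [mul_nonneg (mul_nonneg (sub_nonneg.mpr ht1) (sub_nonneg.mpr hs1))
          (sub_nonneg.mpr hts),
        mul_nonneg (mul_nonneg (sub_nonneg.mpr (by linarith [hLB] : 2*(t-1) ≤ (t+1)*Real.log t)) hst.le) hs1'.le]
    have h : 4 - 8 / (s + 1) ≤ Real.log δ + 4 - 8 * t / (s + t) := by
      rw [hlogδ]; linarith
    exact mul_le_mul_of_nonneg_right h hP.le
  · have e1 : x ^ (α + 1/2) = x ^ α * s := by
      rw [Real.rpow_add hx0, hs, Real.sqrt_eq_rpow]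
    have e2 : x ^ (α - 1/2) = x ^ α / s := by
      rw [Real.rpow_sub hx0, hs, Real.sqrt_eq_rpow]
    rw [e1, e2, hlogδ]
    have core : 0 ≤ s^2*t - t - s^2 + t^2 - 2*s*t*Real.log t := by
      nlinarith [mul_nonneg (mul_nonneg (sub_nonneg.mpr ht1) (sub_nonneg.mpr hs1))
          (sub_nonneg.mpr hts),
        mul_nonneg hs0.le (sub_nonneg.mpr hUB)]
    have core2 : s/t - t/s + 2*Real.log t ≤ s - 1/s := by
      rw [← sub_nonneg]
      have e : s - 1/s - (s/t - t/s + 2*Real.log t)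
          = (s^2*t - t - s^2 + t^2 - 2*s*t*Real.log t)/(s*t) := by
        field_simp; ring
      rw [e]
      exact div_nonneg core (by positivity)
    have h2 := mul_le_mul_of_nonneg_left core2 hP.le
    have eL : x^α * s / t - x^α / s * t + x^α * (2*Real.log t)
        = x^α * (s/t - t/s + 2*Real.log t) := by ring
    have eR : x^α * s - x^α / s = x^α * (s - 1/s) := by ring
    rw [eL, eR]
    exact h2
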